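/- Let H be a separable infinite-dimensional complex Hilbert space, T an invertible bounded linear operator on H, and x ∈ H. Suppose there exist a positive integer r, a nonzero complex number λ, and a constant C > 0 such that ‖(T^{-n} + λ T^n)x‖ ≤ C·n^r for all integers n ≥ 1. Then there exists M > 0 such that ‖T^n (I − T²) x‖ ≤ M·|n|^{r+2} for every nonzero integer n (where T^n for negative n denotes the corresponding power of T^{-1}). -/
import Mathlib


/-- Corollary 2.2 (local version of Lemma 2.1).  If `‖(T^{-n} + λ T^n)x‖ ≤ C n^r` for all
`n ≥ 1`, then there is `M > 0` with `‖T^n (I - T²) x‖ ≤ M |n|^{r+2}` for all nonzero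
integers `n`. -/
theorem stmt11
    {H : Type*} [NormedAddCommGroup H] [InnerProductSpace ℂ H] [CompleteSpace H]
    [TopologicalSpace.SeparableSpace H] (hinf : ¬ FiniteDimensional ℂ H)
    (T : (H →L[ℂ] H)ˣ) (x : H) (r : ℕ) (hr : 0 < r) (lam : ℂ) (hlam : lam ≠ 0)
    (C : ℝ) (hC : 0 < C)
    (hgrowth : ∀ n : ℕ, 1 ≤ n →
      ‖(((T⁻¹ ^ n : (H →L[ℂ] H)ˣ) : H →L[ℂ] H)
        + lam • ((T ^ n : (H →L[ℂ] H)ˣ) : H →L[ℂ] H)) x‖ ≤ C * (n : ℝ) ^ r) :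
    ∃ M : ℝ, 0 < M ∧ ∀ n : ℤ, n ≠ 0 →
      ‖((((T ^ n : (H →L[ℂ] H)ˣ) : H →L[ℂ] H) * (1 - ((T : H →L[ℂ] H)) ^ 2) : H →L[ℂ] H)) x‖
        ≤ M * |(n : ℝ)| ^ (r + 2) := by
  set T' : H →L[ℂ] H := (T : H →L[ℂ] H) with hT'
  set y : ℤ → H := fun n => ((T ^ n : (H →L[ℂ] H)ˣ) : H →L[ℂ] H) x with hy
  have happ : ∀ m n : ℤ, ((T ^ m : (H →L[ℂ] H)ˣ) : H →L[ℂ] H) (y n) = y (m + n) := by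
    intro m n
    simp only [hy]
    rw [← ContinuousLinearMap.mul_apply, ← Units.val_mul, ← zpow_add]
  have hT'app : ∀ n : ℤ, T' (y n) = y (1 + n) := by
    intro n
    have h := happ 1 n
    rwa [zpow_one] at h
  have hlamnorm : 0 < ‖lam‖ := norm_pos_iff.mpr hlam
  -- the hypothesis rewritten over ℤ
  have hbZ : ∀ m : ℤ, 1 ≤ m → ‖y (-m) + lam • y m‖ ≤ C * (m : ℝ) ^ r := by
    intro m hm
    obtain ⟨n, rfl⟩ := Int.eq_ofNat_of_zero_le (by omega : (0:ℤ) ≤ m)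
    have h := hgrowth n (by exact_mod_cast hm)
    have e1 : ((T⁻¹ ^ n : (H →L[ℂ] H)ˣ) : H →L[ℂ] H)
        = ((T ^ (-(n:ℤ)) : (H →L[ℂ] H)ˣ) : H →L[ℂ] H) := by
      rw [zpow_neg, zpow_natCast, inv_pow]
    have e2 : ((T ^ n : (H →L[ℂ] H)ˣ) : H →L[ℂ] H)
        = ((T ^ ((n:ℤ)) : (H →L[ℂ] H)ˣ) : H →L[ℂ] H) := by
      rw [zpow_natCast]
    rw [e1, e2] at h
    simpa [hy, ContinuousLinearMap.add_apply, ContinuousLinearMap.smul_apply] using h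
  set A : ℝ := ‖lam‖⁻¹ * (C + ‖T'‖ * (C * 2 ^ r)) with hA
  have hA0 : 0 ≤ A := by rw [hA]; positivity
  -- positive indices
  have hpos : ∀ m : ℤ, 1 ≤ m → ‖y m - y (m + 2)‖ ≤ A * (m : ℝ) ^ r := by
    intro m hm
    have key : lam • (y m - y (m + 2)) =
        (y (-m) + lam • y m) - T' (y (-(m+1)) + lam • y (m+1)) := by
      rw [map_add, map_smul, hT'app, hT'app,
        show (1:ℤ) + -(m+1) = -m from by ring, show (1:ℤ) + (m+1) = m + 2 from by ring]
      module
    have hm1 : (1:ℝ) ≤ (m:ℝ) := by exact_mod_cast hm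
    have hb1 := hbZ m hm
    have hb2 := hbZ (m+1) (by omega)
    push_cast at hb2
    have hpow : ((m:ℝ)+1)^r ≤ 2^r * (m:ℝ)^r := by
      calc ((m:ℝ)+1)^r ≤ (2*(m:ℝ))^r := by gcongr <;> linarith
        _ = 2^r * (m:ℝ)^r := by rw [mul_pow]
    have hTb : ‖T' (y (-(m+1)) + lam • y (m+1))‖ ≤ ‖T'‖ * (C * ((m:ℝ)+1) ^ r) :=
      (T'.le_opNorm _).trans (by gcongr)
    have hls : ‖lam • (y m - y (m+2))‖ ≤ (C + ‖T'‖ * (C * 2^r)) * (m:ℝ)^r := by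
      rw [key]
      calc ‖(y (-m) + lam • y m) - T' (y (-(m+1)) + lam • y (m+1))‖
          ≤ ‖y (-m) + lam • y m‖ + ‖T' (y (-(m+1)) + lam • y (m+1))‖ := norm_sub_le _ _
        _ ≤ C * (m:ℝ)^r + ‖T'‖ * (C * (2^r * (m:ℝ)^r)) := by
            refine add_le_add hb1 (hTb.trans ?_)
            gcongr
        _ = (C + ‖T'‖ * (C * 2^r)) * (m:ℝ)^r := by ring
    have heq : ‖y m - y (m+2)‖ = ‖lam‖⁻¹ * ‖lam • (y m - y (m+2))‖ := by
      rw [norm_smul, inv_mul_cancel_left₀ hlamnorm.ne']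
    rw [heq, hA, mul_assoc]
    exact mul_le_mul_of_nonneg_left hls (by positivity)
  -- negative indices ≤ -3
  have hneg : ∀ m : ℤ, m ≤ -3 → ‖y m - y (m+2)‖ ≤ (‖lam‖ * A + 2*C) * |(m:ℝ)| ^ r := by
    intro m hm
    set n : ℤ := -m - 2 with hn
    have hn1 : 1 ≤ n := by omega
    have key : y m - y (m+2) = lam • (y n - y (n+2)) -
        ((y (-n) + lam • y n) - (y (-(n+2)) + lam • y (n+2))) := by
      rw [show (-n : ℤ) = m + 2 from by omega, show (-(n+2) : ℤ) = m from by omega]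
      module
    have hd := hpos n hn1
    have hb1 := hbZ n hn1
    have hb2 := hbZ (n+2) (by omega)
    push_cast at hb2
    have hcast : ((n:ℤ):ℝ) = -(m:ℝ) - 2 := by rw [hn]; push_cast; ring
    have habs : |(m:ℝ)| = -(m:ℝ) := abs_of_nonpos (by exact_mod_cast (by omega : m ≤ 0))
    calc ‖y m - y (m+2)‖
        = ‖lam • (y n - y (n+2)) -
            ((y (-n) + lam • y n) - (y (-(n+2)) + lam • y (n+2)))‖ := by rw [key]
      _ ≤ ‖lam • (y n - y (n+2))‖ +
            ‖(y (-n) + lam • y n) - (y (-(n+2)) + lam • y (n+2))‖ := norm_sub_le _ _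
      _ ≤ ‖lam‖ * (A * (n:ℝ)^r) +
            (C * (n:ℝ)^r + C * ((n:ℝ)+2)^r) := by
          refine add_le_add ?_ ((norm_sub_le _ _).trans (add_le_add hb1 hb2))
          rw [norm_smul]
          exact mul_le_mul_of_nonneg_left hd (norm_nonneg _)
      _ ≤ ‖lam‖ * (A * ((n:ℝ)+2)^r) +
            (C * ((n:ℝ)+2)^r + C * ((n:ℝ)+2)^r) := by
          have hpow : ((n:ℝ))^r ≤ ((n:ℝ)+2)^r := by
            have h0 : (0:ℝ) ≤ (n:ℝ) := by exact_mod_cast (by omega : (0:ℤ) ≤ n)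
            gcongr <;> linarith
          gcongr
      _ = (‖lam‖ * A + 2*C) * ((n:ℝ)+2)^r := by ring
      _ = (‖lam‖ * A + 2*C) * |(m:ℝ)|^r := by rw [hcast, habs]; ring_nf
  -- assemble
  set B1 : ℝ := ‖y (-1) - y 1‖ with hB1
  set B2 : ℝ := ‖y (-2) - y 0‖ with hB2
  set M0 : ℝ := max (max A (‖lam‖ * A + 2*C)) (max B1 B2) with hM0
  have hM0nn : 0 ≤ M0 :=
    le_trans (norm_nonneg _) ((le_max_left B1 B2).trans (le_max_right _ _))
  refine ⟨M0 + 1, by linarith, ?_⟩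
  intro n hn
  have hsq : ((T ^ (2:ℤ) : (H →L[ℂ] H)ˣ) : H →L[ℂ] H) = T' ^ 2 := by
    rw [show (2:ℤ) = ((2:ℕ):ℤ) from rfl, zpow_natCast, Units.val_pow_eq_pow_val]
  have hgoal : ((((T ^ n : (H →L[ℂ] H)ˣ) : H →L[ℂ] H) * (1 - T' ^ 2) : H →L[ℂ] H)) x
      = y n - y (n+2) := by
    rw [← hsq, ContinuousLinearMap.mul_apply, ContinuousLinearMap.sub_apply,
      ContinuousLinearMap.one_apply, map_sub]
    simp only [hy]
    rw [← ContinuousLinearMap.mul_apply, ← Units.val_mul, ← zpow_add]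
  rw [hgoal]
  have habs1 : (1:ℝ) ≤ |(n:ℝ)| := by
    rw [show (1:ℝ) = ((1:ℤ):ℝ) from by norm_num, ← Int.cast_abs]
    exact_mod_cast Int.one_le_abs (by omega : n ≠ 0)
  have hstep : ‖y n - y (n+2)‖ ≤ M0 * |(n:ℝ)| ^ r := by
    rcases lt_or_ge n 0 with hneg0 | hpos0
    · rcases (by omega : n = -1 ∨ n = -2 ∨ n ≤ -3) with h | h | h
      · subst h
        rw [show (-1 : ℤ) + 2 = 1 from by norm_num, ← hB1]
        calc B1 ≤ M0 := (le_max_left B1 B2).trans (le_max_right _ _)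
          _ = M0 * 1 := by ring
          _ ≤ M0 * |((-1:ℤ):ℝ)| ^ r := by
              refine mul_le_mul_of_nonneg_left ?_ hM0nn
              exact one_le_pow₀ (by norm_num)
      · subst h
        rw [show (-2 : ℤ) + 2 = 0 from by norm_num, ← hB2]
        calc B2 ≤ M0 := (le_max_right B1 B2).trans (le_max_right _ _)
          _ = M0 * 1 := by ring
          _ ≤ M0 * |((-2:ℤ):ℝ)| ^ r := by
              refine mul_le_mul_of_nonneg_left ?_ hM0nn
              exact one_le_pow₀ (by norm_num)
      · exact (hneg n h).trans (mul_le_mul_of_nonneg_right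
          (((le_max_right A _).trans (le_max_left _ _)) : ‖lam‖ * A + 2*C ≤ M0)
          (by positivity))
    · have hn1 : 1 ≤ n := by omega
      have := hpos n hn1
      have habsn : |(n:ℝ)| = (n:ℝ) := abs_of_nonneg (by exact_mod_cast hpos0)
      rw [habsn]
      exact this.trans (mul_le_mul_of_nonneg_right
        (((le_max_left A _).trans (le_max_left _ _)) : A ≤ M0)
        (by positivity))
  calc ‖y n - y (n+2)‖ ≤ M0 * |(n:ℝ)| ^ r := hstep
    _ ≤ (M0 + 1) * |(n:ℝ)| ^ (r+2) := by
        refine mul_le_mul (by linarith) (pow_le_pow_right₀ habs1 (by omega))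
          (by positivity) (by linarith)
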